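/- In R = ℚ[x,y,z], consider M = R² and the submodule U generated by the columns (x², y²), (xy, yz), (xz, z²). Then U = U₁ ∩ U₂ ∩ U₃, where U₁ is generated by (0,1) and (x,0); U₂ is generated by (x,z), (y², z²), and (0, xz − y²); and U₃ is generated by (1,0), (0,y²), (0,yz), (0,z²). Moreover the associated primes of M/U are (x), (xz − y²), and (y,z). -/

import Mathlib

/- Auxiliary development for STATEMENT 19 -/

open MvPolynomial

noncomputable section Statement19Aux

abbrev R3 : Type := MvPolynomial (Fin 3) ℚ
abbrev R2 : Type := MvPolynomial (Fin 2) ℚ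

def gyz : Fin 3 → R3 := ![X 0, 0, 0]
def gz : Fin 3 → R3 := ![X 0, X 1, 0]
def gx : Fin 3 → R3 := ![0, X 1, X 2]

@[simp] lemma gyz0 : gyz 0 = X 0 := rfl
@[simp] lemma gyz1 : gyz 1 = 0 := rfl
@[simp] lemma gyz2 : gyz 2 = 0 := rfl
@[simp] lemma gz0 : gz 0 = X 0 := rfl
@[simp] lemma gz1 : gz 1 = X 1 := rfl
@[simp] lemma gz2 : gz 2 = 0 := rfl
@[simp] lemma gx0 : gx 0 = 0 := rfl
@[simp] lemma gx1 : gx 1 = X 1 := rfl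
@[simp] lemma gx2 : gx 2 = X 2 := rfl

def q3 : R3 := X 0 * X 2 - X 1 ^ 2
def J3 : Ideal R3 := Ideal.span {X 1 ^ 2, X 1 * X 2, X 2 ^ 2}


lemma sub_aeval_mem (I : Ideal R3) (g : Fin 3 → R3) (hg : ∀ i, X i - g i ∈ I) (f : R3) :
    f - aeval g f ∈ I := by
  induction f using MvPolynomial.induction_on with
  | C a => simp
  | add p q hp hq =>
      have : p + q - aeval g (p + q) = (p - aeval g p) + (q - aeval g q) := by
        rw [map_add]; ring
      rw [this]; exact add_mem hp hq
  | mul_X p i hp =>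
      have : p * X i - aeval g (p * X i)
          = (p - aeval g p) * X i + aeval g p * (X i - g i) := by
        rw [map_mul, aeval_X]; ring
      rw [this]; exact add_mem (I.mul_mem_right _ hp) (I.mul_mem_left _ (hg i))

lemma mem_yz_iff (f : R3) :
    f ∈ Ideal.span {X 1, X 2} ↔ aeval gyz f = 0 := by
  constructor
  · intro hf
    obtain ⟨a, b, rfl⟩ := Ideal.mem_span_pair.mp hf
    simp
  · intro hf
    have := sub_aeval_mem (Ideal.span {X 1, X 2}) gyz ?_ f
    · rwa [hf, sub_zero] at this
    · intro i
      fin_cases i <;>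
        simp [Ideal.subset_span, Set.mem_insert_iff, Ideal.zero_mem]
      · exact Ideal.subset_span (by simp)
      · exact Ideal.subset_span (by simp)

lemma mem_z_iff (f : R3) :
    f ∈ Ideal.span {(X 2 : R3)} ↔ aeval gz f = 0 := by
  constructor
  · intro hf
    obtain ⟨a, rfl⟩ := Ideal.mem_span_singleton.mp hf
    simp
  · intro hf
    have := sub_aeval_mem (Ideal.span {X 2}) gz ?_ f
    · rwa [hf, sub_zero] at this
    · intro i
      fin_cases i <;> simp

lemma mem_x_iff (f : R3) :
    f ∈ Ideal.span {(X 0 : R3)} ↔ aeval gx f = 0 := by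
  constructor
  · intro hf
    obtain ⟨a, rfl⟩ := Ideal.mem_span_singleton.mp hf
    simp
  · intro hf
    have := sub_aeval_mem (Ideal.span {X 0}) gx ?_ f
    · rwa [hf, sub_zero] at this
    · intro i
      fin_cases i <;> simp

lemma isPrime_x : (Ideal.span {(X 0 : R3)}).IsPrime := by
  have : Ideal.span {(X 0 : R3)} = RingHom.ker ((aeval gx : R3 →ₐ[ℚ] R3) : R3 →+* R3) := by
    ext f; rw [mem_x_iff]; rfl
  rw [this]; exact RingHom.ker_isPrime _

lemma isPrime_yz : (Ideal.span {(X 1 : R3), X 2}).IsPrime := by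
  have : Ideal.span {(X 1 : R3), X 2} = RingHom.ker ((aeval gyz : R3 →ₐ[ℚ] R3) : R3 →+* R3) := by
    ext f; rw [mem_yz_iff]; rfl
  rw [this]; exact RingHom.ker_isPrime _

lemma prime_x : Prime (X 0 : R3) :=
  (Ideal.span_singleton_prime (X_ne_zero 0)).mp isPrime_x

lemma x_ndvd_y : ¬ (X 0 : R3) ∣ X 1 := by
  rintro ⟨t, ht⟩
  have := congrArg (aeval gx : R3 →ₐ[ℚ] R3) ht
  simp [gx] at this

lemma x_ndvd_y2 : ¬ (X 0 : R3) ∣ X 1 ^ 2 := by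
  intro h
  rcases (prime_x.dvd_mul (a := X 1) (b := X 1)).mp (by rwa [← sq]) with h | h <;>
    exact x_ndvd_y h

lemma expand2_monomial (d : Fin 2 →₀ ℕ) (r : ℚ) :
    expand 2 (monomial d r) = monomial (2 • d) r := by
  rw [expand_monomial, monomial_eq, Finsupp.prod,
    Finsupp.support_smul_eq (two_ne_zero)]

lemma coeff_expand2 (f : R2) (d : Fin 2 →₀ ℕ) :
    coeff (2 • d) (expand 2 f) = coeff d f := by
  induction f using MvPolynomial.induction_on' with
  | monomial e r =>
      rw [expand2_monomial, coeff_monomial, coeff_monomial]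
      congr 1
      simp only [eq_iff_iff]
      constructor
      · intro h
        ext i
        have := DFunLike.congr_fun h i
        simpa using this
      · rintro rfl; rfl
  | add p q hp hq => rw [map_add, coeff_add, coeff_add, hp, hq]

lemma expand2_inj : Function.Injective (expand 2 : R2 →ₐ[ℚ] R2) := by
  intro a b h
  ext d
  rw [← coeff_expand2 a d, ← coeff_expand2 b d, h]

def gΦ : Fin 3 → R2 := ![X 0 ^ 2, X 0 * X 1, X 1 ^ 2]
def Φ : R3 →ₐ[ℚ] R2 := aeval gΦ
def σA : R2 →ₐ[ℚ] R3 := aeval ![X 0, X 2]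
def τ : R2 →ₐ[ℚ] R2 := aeval ![-X 0, X 1]

@[simp] lemma Φ_x : Φ (X 0) = X 0 ^ 2 := by simp [Φ, gΦ]
@[simp] lemma Φ_y : Φ (X 1) = X 0 * X 1 := by simp [Φ, gΦ]
@[simp] lemma Φ_z : Φ (X 2) = X 1 ^ 2 := by simp [Φ, gΦ]
@[simp] lemma Φ_q3 : Φ q3 = 0 := by simp [q3]; ring

lemma Φ_σA (a : R2) : Φ (σA a) = expand 2 a := by
  have : Φ.comp σA = (expand 2 : R2 →ₐ[ℚ] R2) := by
    apply MvPolynomial.algHom_ext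
    intro i
    fin_cases i <;> simp [σA, expand_X]
  exact congrFun (congrArg DFunLike.coe this) a

lemma τ_expand2 (a : R2) : τ (expand 2 a) = expand 2 a := by
  have : τ.comp (expand 2 : R2 →ₐ[ℚ] R2) = (expand 2 : R2 →ₐ[ℚ] R2) := by
    apply MvPolynomial.algHom_ext
    intro i
    fin_cases i <;> simp [τ, expand_X]
  exact congrFun (congrArg DFunLike.coe this) a

lemma even_odd (a b : R2) (h : expand 2 a + X 0 * X 1 * expand 2 b = 0) :
    a = 0 ∧ b = 0 := by
  have h2 := congrArg τ h
  rw [map_add, map_mul, map_mul, τ_expand2, τ_expand2, map_zero] at h2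
  have hτ0 : τ (X 0) = -X 0 := by simp [τ]
  have hτ1 : τ (X 1) = X 1 := by simp [τ]
  rw [hτ0, hτ1] at h2
  have hE : (2 : R2) * expand 2 a = 0 := by linear_combination h + h2
  have hEa : expand 2 a = 0 := by
    rcases mul_eq_zero.mp hE with h' | h'
    · exact absurd h' two_ne_zero
    · exact h'
  have hFb : expand 2 b = 0 := by
    have : X 0 * X 1 * expand 2 b = 0 := by linear_combination h - hEa
    rcases mul_eq_zero.mp this with h' | h'
    · rcases mul_eq_zero.mp h' with h'' | h''
      · exact absurd h'' (X_ne_zero 0)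
      · exact absurd h'' (X_ne_zero 1)
    · exact h'
  constructor
  · exact expand2_inj (by rw [hEa, map_zero])
  · exact expand2_inj (by rw [hFb, map_zero])

lemma normal_form (f : R3) :
    ∃ a b : R2, f - (σA a + X 1 * σA b) ∈ Ideal.span {q3} := by
  induction f using MvPolynomial.induction_on with
  | C r =>
      refine ⟨C r, 0, ?_⟩
      simp [σA]
  | add p q hp hq =>
      obtain ⟨a1, b1, h1⟩ := hp
      obtain ⟨a2, b2, h2⟩ := hq
      refine ⟨a1 + a2, b1 + b2, ?_⟩
      have : p + q - (σA (a1 + a2) + X 1 * σA (b1 + b2))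
          = (p - (σA a1 + X 1 * σA b1)) + (q - (σA a2 + X 1 * σA b2)) := by
        rw [map_add, map_add]; ring
      rw [this]; exact add_mem h1 h2
  | mul_X p i hp =>
      obtain ⟨a, b, h⟩ := hp
      fin_cases i
      · show ∃ a b : R2, p * X 0 - (σA a + X 1 * σA b) ∈ Ideal.span {q3}
        refine ⟨a * X 0, b * X 0, ?_⟩
        have : p * X 0 - (σA (a * X 0) + X 1 * σA (b * X 0))
            = (p - (σA a + X 1 * σA b)) * X 0 := by
          rw [map_mul, map_mul]
          have : σA (X 0) = X 0 := by simp [σA]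
          rw [this]; ring
        rw [this]; exact Ideal.mul_mem_right _ _ h
      · show ∃ a b : R2, p * X 1 - (σA a + X 1 * σA b) ∈ Ideal.span {q3}
        refine ⟨X 0 * X 1 * b, a, ?_⟩
        have : p * X 1 - (σA (X 0 * X 1 * b) + X 1 * σA a)
            = (p - (σA a + X 1 * σA b)) * X 1 - σA b * q3 := by
          rw [map_mul, map_mul]
          have h0 : σA (X 0 : R2) = X 0 := by simp [σA]
          have h1 : σA (X 1 : R2) = X 2 := by simp [σA]
          rw [h0, h1, q3]; ring
        rw [this]
        exact sub_mem (Ideal.mul_mem_right _ _ h)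
          (Ideal.mul_mem_left _ _ (Ideal.subset_span rfl))
      · show ∃ a b : R2, p * X 2 - (σA a + X 1 * σA b) ∈ Ideal.span {q3}
        refine ⟨a * X 1, b * X 1, ?_⟩
        have : p * X 2 - (σA (a * X 1) + X 1 * σA (b * X 1))
            = (p - (σA a + X 1 * σA b)) * X 2 := by
          rw [map_mul, map_mul]
          have : σA (X 1 : R2) = X 2 := by simp [σA]
          rw [this]; ring
        rw [this]; exact Ideal.mul_mem_right _ _ h

lemma mem_q_iff (f : R3) : f ∈ Ideal.span {q3} ↔ Φ f = 0 := by
  constructor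
  · intro hf
    obtain ⟨c, rfl⟩ := Ideal.mem_span_singleton.mp hf
    rw [map_mul, Φ_q3, zero_mul]
  · intro hf
    obtain ⟨a, b, h⟩ := normal_form f
    obtain ⟨c, hc⟩ := Ideal.mem_span_singleton.mp h
    have hΦ : expand 2 a + X 0 * X 1 * expand 2 b = 0 := by
      have := congrArg Φ hc
      rw [map_sub, map_mul, Φ_q3, zero_mul, map_add, map_mul, Φ_y, Φ_σA, Φ_σA, hf] at this
      linear_combination -this
    obtain ⟨ha, hb⟩ := even_odd a b hΦ
    rw [ha, hb] at hc
    simp only [map_zero, mul_zero, add_zero, sub_zero] at hc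
    rw [Ideal.mem_span_singleton]
    exact ⟨c, hc⟩

lemma isPrime_q : (Ideal.span {q3}).IsPrime := by
  have : Ideal.span {q3} = RingHom.ker (Φ : R3 →+* R2) := by
    ext f; rw [mem_q_iff]; rfl
  rw [this]; exact RingHom.ker_isPrime _

lemma q3_ne_zero : q3 ≠ 0 := by
  intro h
  have := congrArg (eval ![1, 0, 1]) h
  simp [q3] at this

lemma prime_q : Prime q3 := (Ideal.span_singleton_prime q3_ne_zero).mp isPrime_q

lemma q_ndvd_x : ¬ q3 ∣ X 0 := by
  rintro ⟨t, ht⟩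
  have := congrArg Φ ht
  rw [map_mul, Φ_q3, zero_mul, Φ_x] at this
  exact pow_ne_zero 2 (X_ne_zero 0) this

lemma q_ndvd_zy2 : ¬ q3 ∣ (X 2 - X 1 ^ 2 : R3) := by
  rintro ⟨t, ht⟩
  have := congrArg (eval ![0, 1] ∘ Φ) ht
  simp [Φ_q3] at this

lemma mem_span_triple {M : Type*} [AddCommGroup M] [Module R3 M] {u v w t : M} :
    t ∈ Submodule.span R3 {u, v, w} ↔ ∃ a b c : R3, t = a • u + b • v + c • w := by
  constructor
  · intro ht
    rw [Submodule.mem_span_insert] at ht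
    obtain ⟨a, w', hw', rfl⟩ := ht
    obtain ⟨b, c, rfl⟩ := Submodule.mem_span_pair.mp hw'
    exact ⟨a, b, c, by rw [add_assoc]⟩
  · rintro ⟨a, b, c, rfl⟩
    refine add_mem (add_mem ?_ ?_) ?_ <;>
      exact Submodule.smul_mem _ _ (Submodule.subset_span (by simp))

lemma mem_J3_iff (g : R3) :
    g ∈ J3 ↔ aeval gyz g = 0 ∧ aeval gyz (pderiv 1 g) = 0 ∧ aeval gyz (pderiv 2 g) = 0 := by
  constructor
  · intro hg
    obtain ⟨a, b, c, rfl⟩ := mem_span_triple.mp hg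
    refine ⟨?_, ?_, ?_⟩ <;>
      simp [smul_eq_mul, pderiv_mul, mul_comm, mul_assoc]
  · rintro ⟨h0, h1, h2⟩
    have hyz : g ∈ Ideal.span {(X 1 : R3), X 2} := (mem_yz_iff g).mpr h0
    obtain ⟨a, b, rfl⟩ := Ideal.mem_span_pair.mp hyz
    have ha : aeval gyz a = 0 := by
      have := h1
      simp [pderiv_mul, pderiv_X, Pi.single_apply] at this
      simpa using this
    have hb : aeval gyz b = 0 := by
      have := h2
      simp [pderiv_mul, pderiv_X, Pi.single_apply] at this
      simpa using this
    obtain ⟨a1, a2, rfl⟩ := Ideal.mem_span_pair.mp ((mem_yz_iff a).mpr ha)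
    obtain ⟨b1, b2, rfl⟩ := Ideal.mem_span_pair.mp ((mem_yz_iff b).mpr hb)
    have : (a1 * X 1 + a2 * X 2) * X 1 + (b1 * X 1 + b2 * X 2) * X 2
        = a1 • (X 1 ^ 2) + (a2 + b1) • ((X 1 : R3) * X 2) + b2 • (X 2 ^ 2) := by
      simp only [smul_eq_mul]; ring
    rw [this]
    exact mem_span_triple.mpr ⟨_, _, _, rfl⟩

lemma radical_J3 : J3.radical = Ideal.span {(X 1 : R3), X 2} := by
  apply le_antisymm
  · have h1 : J3 ≤ Ideal.span {(X 1 : R3), X 2} := by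
      rw [J3, Ideal.span_le]
      rintro t (rfl | rfl | rfl)
      · exact Ideal.pow_mem_of_mem _ (Ideal.subset_span (by simp)) 2 (by norm_num)
      · exact Ideal.mul_mem_right _ _ (Ideal.subset_span (by simp))
      · exact Ideal.pow_mem_of_mem _ (Ideal.subset_span (by simp)) 2 (by norm_num)
    calc J3.radical ≤ (Ideal.span {(X 1:R3), X 2}).radical := Ideal.radical_mono h1
    _ = _ := isPrime_yz.radical
  · rw [Ideal.span_le]
    rintro t (rfl | rfl)
    · exact Ideal.mem_radical_of_pow_mem (m := 2)
        (Ideal.le_radical (Ideal.subset_span (by simp [J3] : (X 1:R3)^2 ∈ _)))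
    · exact Ideal.mem_radical_of_pow_mem (m := 2)
        (Ideal.le_radical (Ideal.subset_span (by simp [J3] : (X 2:R3)^2 ∈ _)))

lemma primary_J3 : J3.IsPrimary := by
  rw [Ideal.isPrimary_iff]
  constructor
  · intro h
    have h1 : (1 : R3) ∈ J3 := h ▸ Submodule.mem_top
    have := (mem_J3_iff 1).mp h1
    simp at this
  · intro a b hab
    rw [radical_J3]
    by_cases hb : b ∈ Ideal.span {(X 1 : R3), X 2}
    · exact Or.inr hb
    · left
      have hφb : aeval gyz b ≠ 0 := fun h => hb ((mem_yz_iff b).mpr h)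
      obtain ⟨h0, h1, h2⟩ := (mem_J3_iff (a * b)).mp hab
      rw [map_mul] at h0
      have ha0 : aeval gyz a = 0 := by
        rcases mul_eq_zero.mp h0 with h | h
        · exact h
        · exact absurd h hφb
      rw [mem_J3_iff]
      refine ⟨ha0, ?_, ?_⟩
      · rw [pderiv_mul, map_add, map_mul, map_mul, ha0, zero_mul, add_zero] at h1
        rcases mul_eq_zero.mp h1 with h | h
        · exact h
        · exact absurd h hφb
      · rw [pderiv_mul, map_add, map_mul, map_mul, ha0, zero_mul, add_zero] at h2
        rcases mul_eq_zero.mp h2 with h | h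
        · exact h
        · exact absurd h hφb

lemma phi_pderiv2 (α β γ : R3) :
    aeval gyz (pderiv 2 (α * X 2 + β * X 2 ^ 2 + γ * q3))
      = aeval gyz α + aeval gyz γ * X 0 := by
  simp [q3, pderiv_mul, pderiv_X, Pi.single_apply]

theorem assPrimes_prod_subset {R M N : Type*} [CommRing R] [AddCommGroup M] [Module R M]
    [AddCommGroup N] [Module R N] :
    associatedPrimes R (M × N) ⊆ associatedPrimes R M ∪ associatedPrimes R N := by
  exact (associatedPrimes.prod R M N).le

lemma U1_eq :
    Submodule.span R3 {((0:R3), (1:R3)), (X 0, 0)}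
      = Submodule.prod (Ideal.span {(X 0 : R3)}) (⊤ : Submodule R3 R3) := by
  apply le_antisymm
  · rw [Submodule.span_le]
    rintro t (rfl | rfl) <;>
      exact Submodule.mem_prod.mpr ⟨by simp [Ideal.subset_span, Ideal.mem_span_singleton], trivial⟩
  · rintro ⟨f, g⟩ hm
    obtain ⟨hf, -⟩ := Submodule.mem_prod.mp hm
    obtain ⟨t, rfl⟩ := Ideal.mem_span_singleton.mp hf
    have : ((X 0 * t : R3), g) = t • ((X 0 : R3), (0:R3)) + g • ((0:R3), (1:R3)) := by
      simp [Prod.ext_iff, mul_comm]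
    rw [this]
    exact add_mem (Submodule.smul_mem _ _ (Submodule.subset_span (by simp)))
      (Submodule.smul_mem _ _ (Submodule.subset_span (by simp)))

lemma U3_eq :
    Submodule.span R3 {((1:R3), (0:R3)), (0, X 1 ^ 2), (0, X 1 * X 2), (0, X 2 ^ 2)}
      = Submodule.prod (⊤ : Submodule R3 R3) J3 := by
  apply le_antisymm
  · rw [Submodule.span_le]
    rintro t (rfl | rfl | rfl | rfl) <;>
      refine Submodule.mem_prod.mpr ⟨trivial, ?_⟩
    · exact J3.zero_mem
    · exact Ideal.subset_span (by simp)
    · exact Ideal.subset_span (by simp)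
    · exact Ideal.subset_span (by simp)
  · rintro ⟨f, g⟩ hm
    obtain ⟨-, hg⟩ := Submodule.mem_prod.mp hm
    obtain ⟨a, b, c, rfl⟩ := mem_span_triple.mp hg
    have : ((f : R3), a • (X 1^2 : R3) + b • (X 1 * X 2) + c • X 2^2)
        = f • ((1:R3), (0:R3)) + a • ((0:R3), (X 1^2:R3))
          + b • ((0:R3), (X 1 * X 2 : R3)) + c • ((0:R3), (X 2^2:R3)) := by
      simp [Prod.ext_iff]
    rw [this]
    refine add_mem (add_mem (add_mem ?_ ?_) ?_) ?_ <;>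
      exact Submodule.smul_mem _ _ (Submodule.subset_span (by simp))

lemma sub_phiz_mem (f : R3) : f - aeval gz f ∈ Ideal.span {(X 2 : R3)} := by
  refine sub_aeval_mem _ gz (fun i => ?_) f
  fin_cases i <;> simp [gz]

lemma mem_U2_iff (F G : R3) :
    (F, G) ∈ Submodule.span R3 {((X 0:R3), (X 2:R3)), (X 1^2, X 2^2), ((0:R3), q3)} ↔
      X 2 * F - X 0 * G ∈ Ideal.span {q3} := by
  constructor
  · intro hm
    obtain ⟨α, β, γ, hab⟩ := mem_span_triple.mp hm
    obtain ⟨hF, hG⟩ := Prod.ext_iff.mp hab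
    simp only [Prod.fst_add, Prod.snd_add, Prod.smul_fst, Prod.smul_snd, smul_eq_mul] at hF hG
    rw [Ideal.mem_span_singleton]
    refine ⟨-(β * X 2 + γ * X 0), ?_⟩
    rw [hF, hG, q3]; ring
  · intro hq
    obtain ⟨h, hh⟩ := Ideal.mem_span_singleton.mp hq
    -- apply the z ↦ 0 evaluation
    have e1 : X 0 * aeval gz G = X 1 ^ 2 * aeval gz h := by
      have := congrArg (aeval gz) hh
      simp only [map_sub, map_mul, map_pow, aeval_X, q3] at this
      have g0 : (gz 0 : R3) = X 0 := rfl
      have g1 : (gz 1 : R3) = X 1 := rfl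
      have g2 : (gz 2 : R3) = 0 := rfl
      rw [g0, g1, g2] at this
      linear_combination -this
    have hdvd : (X 0 : R3) ∣ X 1 ^ 2 * aeval gz h := ⟨aeval gz G, e1.symm⟩
    have hk : (X 0 : R3) ∣ aeval gz h := by
      rcases (prime_x.dvd_mul).mp hdvd with h' | h'
      · exact absurd h' x_ndvd_y2
      · exact h'
    obtain ⟨k, hk⟩ := hk
    have hGk : aeval gz G = X 1 ^ 2 * k := by
      have : X 0 * aeval gz G = X 0 * (X 1 ^ 2 * k) := by rw [e1, hk]; ring
      exact mul_left_cancel₀ (X_ne_zero 0) this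
    obtain ⟨m, hm⟩ := Ideal.mem_span_singleton.mp (sub_phiz_mem h)
    obtain ⟨n, hn⟩ := Ideal.mem_span_singleton.mp (sub_phiz_mem G)
    have hG : G = X 1 ^ 2 * k + X 2 * n := by
      have := hn; rw [hGk] at this; linear_combination this
    have hhm : h = X 0 * k + X 2 * m := by
      have := hm; rw [hk] at this; linear_combination this
    have hF : F = X 0 * n + X 0 ^ 2 * k + X 0 * X 2 * m - X 1 ^ 2 * m := by
      have e2 : X 2 * F = X 2 * (X 0 * n + X 0 ^ 2 * k + X 0 * X 2 * m - X 1 ^ 2 * m) := by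
        rw [show X 2 * F = X 0 * G + q3 * h by linear_combination hh, hG, hhm, q3]; ring
      exact mul_left_cancel₀ (X_ne_zero 2) e2
    refine mem_span_triple.mpr ⟨X 0 * k + X 2 * m + n, -m, -k, ?_⟩
    rw [Prod.ext_iff]
    constructor
    · simp only [Prod.fst_add, Prod.smul_fst, smul_eq_mul]
      rw [hF]; ring
    · simp only [Prod.snd_add, Prod.smul_snd, smul_eq_mul]
      rw [hG, q3]; ring

def Uspan : Submodule R3 (R3 × R3) :=
  Submodule.span R3 {((X 0:R3)^2, (X 1:R3)^2), (X 0 * X 1, X 1 * X 2), (X 0 * X 2, (X 2:R3)^2)}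
def U1span : Submodule R3 (R3 × R3) := Submodule.span R3 {((0:R3), (1:R3)), (X 0, 0)}
def U2span : Submodule R3 (R3 × R3) :=
  Submodule.span R3 {((X 0:R3), (X 2:R3)), (X 1^2, X 2^2), ((0:R3), q3)}
def U3span : Submodule R3 (R3 × R3) :=
  Submodule.span R3 {((1:R3), (0:R3)), (0, X 1 ^ 2), (0, X 1 * X 2), (0, X 2 ^ 2)}

lemma part1 : Uspan = U1span ⊓ U2span ⊓ U3span := by
  apply le_antisymm
  · rw [Uspan, Submodule.span_le]
    rintro t (rfl | rfl | rfl) <;>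
      refine Submodule.mem_inf.mpr ⟨Submodule.mem_inf.mpr ⟨?_, ?_⟩, ?_⟩
    · rw [U1span, U1_eq]
      exact Submodule.mem_prod.mpr ⟨Ideal.mem_span_singleton.mpr ⟨X 0, by ring⟩, trivial⟩
    · exact (mem_U2_iff _ _).mpr (Ideal.mem_span_singleton.mpr ⟨X 0, by rw [q3]; ring⟩)
    · rw [U3span, U3_eq]
      exact Submodule.mem_prod.mpr ⟨trivial, Ideal.subset_span (by simp)⟩
    · rw [U1span, U1_eq]
      exact Submodule.mem_prod.mpr ⟨Ideal.mem_span_singleton.mpr ⟨X 1, by ring⟩, trivial⟩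
    · exact (mem_U2_iff _ _).mpr (Ideal.mem_span_singleton.mpr ⟨0, by rw [q3]; ring⟩)
    · rw [U3span, U3_eq]
      exact Submodule.mem_prod.mpr ⟨trivial, Ideal.subset_span (by simp)⟩
    · rw [U1span, U1_eq]
      exact Submodule.mem_prod.mpr ⟨Ideal.mem_span_singleton.mpr ⟨X 2, by ring⟩, trivial⟩
    · exact (mem_U2_iff _ _).mpr (Ideal.mem_span_singleton.mpr ⟨0, by rw [q3]; ring⟩)
    · rw [U3span, U3_eq]
      exact Submodule.mem_prod.mpr ⟨trivial, Ideal.subset_span (by simp)⟩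
  · rintro ⟨F, G⟩ hm
    rw [Submodule.mem_inf, Submodule.mem_inf] at hm
    obtain ⟨⟨h1, h2⟩, h3⟩ := hm
    rw [U1span, U1_eq] at h1
    have hFx : (X 0 : R3) ∣ F := Ideal.mem_span_singleton.mp (Submodule.mem_prod.mp h1).1
    rw [U3span, U3_eq] at h3
    have hG3 : G ∈ J3 := (Submodule.mem_prod.mp h3).2
    rw [U2span] at h2
    obtain ⟨α, β, γ, hab⟩ := mem_span_triple.mp h2
    obtain ⟨hF, hG⟩ := Prod.ext_iff.mp hab
    simp only [Prod.fst_add, Prod.snd_add, Prod.smul_fst, Prod.smul_snd, smul_eq_mul] at hF hG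
    -- x divides β
    have hdvd : (X 0 : R3) ∣ β * X 1 ^ 2 := by
      rw [show β * X 1 ^ 2 = F - α * X 0 by linear_combination -hF]
      exact dvd_sub hFx ⟨α, by ring⟩
    obtain ⟨β', hβ⟩ : (X 0 : R3) ∣ β := by
      rcases prime_x.dvd_mul.mp hdvd with h' | h'
      · exact h'
      · exact absurd h' x_ndvd_y2
    -- derivative condition from G ∈ J3
    have hd := ((mem_J3_iff G).mp hG3).2.2
    rw [hG] at hd
    have hα : aeval gyz α + aeval gyz γ * X 0 = 0 := by rw [← phi_pderiv2 α β γ]; exact hd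
    have hker : aeval gyz (α + β' * X 1 ^ 2 + (γ + β' * X 2) * X 0) = 0 := by
      simp only [map_add, map_mul, map_pow, aeval_X, gyz0, gyz1, gyz2]
      linear_combination hα
    obtain ⟨b, c, hbc⟩ := Ideal.mem_span_pair.mp ((mem_yz_iff _).mpr hker)
    rw [Uspan]
    refine mem_span_triple.mpr ⟨-(γ + β' * X 2), b, c, ?_⟩
    rw [Prod.ext_iff]
    constructor
    · simp only [Prod.fst_add, Prod.smul_fst, smul_eq_mul]
      linear_combination hF + X 1 ^ 2 * hβ - X 0 * hbc
    · simp only [Prod.snd_add, Prod.smul_snd, smul_eq_mul]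
      rw [q3] at hG
      linear_combination hG + X 2 ^ 2 * hβ - X 2 * hbc

lemma mem_U_iff (F G : R3) :
    (F, G) ∈ Uspan ↔
      F ∈ Ideal.span {(X 0 : R3)} ∧ (X 2 * F - X 0 * G ∈ Ideal.span {q3}) ∧ G ∈ J3 := by
  rw [part1, Submodule.mem_inf, Submodule.mem_inf]
  rw [show U1span = _ from U1_eq, show U3span = _ from U3_eq]
  rw [show ((F, G) ∈ U2span) = ((F, G) ∈ Submodule.span R3
      {((X 0:R3), (X 2:R3)), (X 1^2, X 2^2), ((0:R3), q3)}) from rfl, mem_U2_iff]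
  constructor
  · rintro ⟨⟨hp1, hq⟩, hp3⟩
    exact ⟨(Submodule.mem_prod.mp hp1).1, hq, (Submodule.mem_prod.mp hp3).2⟩
  · rintro ⟨hx, hq, hJ⟩
    exact ⟨⟨Submodule.mem_prod.mpr ⟨hx, trivial⟩, hq⟩, Submodule.mem_prod.mpr ⟨trivial, hJ⟩⟩

set_option maxHeartbeats 2000000 in
lemma part2 :
    associatedPrimes R3 ((R3 × R3) ⧸ Uspan)
      = {Ideal.span {X 0}, Ideal.span {q3}, Ideal.span {(X 1 : R3), X 2}} := by
  have hNoeth : IsNoetherianRing R3 := inferInstance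
  -- the three upper bound maps
  -- e1 : quotient by U1 injects into R3/(x)
  have hcond1 : U1span ≤ LinearMap.ker ((Ideal.span {(X 0:R3)}).mkQ ∘ₗ LinearMap.fst R3 R3 R3) := by
    intro m hm
    rw [U1span, U1_eq] at hm
    simp only [LinearMap.mem_ker, LinearMap.comp_apply, LinearMap.fst_apply,
      Submodule.mkQ_apply, Submodule.Quotient.mk_eq_zero]
    exact (Submodule.mem_prod.mp hm).1
  have hker1 : LinearMap.ker ((Ideal.span {(X 0:R3)}).mkQ ∘ₗ LinearMap.fst R3 R3 R3) ≤ U1span := by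
    intro m hm
    simp only [LinearMap.mem_ker, LinearMap.comp_apply, LinearMap.fst_apply,
      Submodule.mkQ_apply, Submodule.Quotient.mk_eq_zero] at hm
    rw [U1span, U1_eq]
    exact Submodule.mem_prod.mpr ⟨hm, trivial⟩
  have hass1 : associatedPrimes R3 ((R3 × R3) ⧸ U1span) ⊆ {Ideal.span {(X 0:R3)}} := by
    have hinj : Function.Injective (U1span.liftQ _ hcond1) :=
      LinearMap.ker_eq_bot.mp (Submodule.ker_liftQ_eq_bot _ _ _ hker1)
    refine (associatedPrimes.subset_of_injective hinj).trans ?_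
    rw [associatedPrimes.eq_singleton_of_isPrimary isPrime_x.isPrimary, isPrime_x.radical]
  have hcond3 : U3span ≤ LinearMap.ker (J3.mkQ ∘ₗ LinearMap.snd R3 R3 R3) := by
    intro m hm
    rw [U3span, U3_eq] at hm
    simp only [LinearMap.mem_ker, LinearMap.comp_apply, LinearMap.snd_apply,
      Submodule.mkQ_apply, Submodule.Quotient.mk_eq_zero]
    exact (Submodule.mem_prod.mp hm).2
  have hker3 : LinearMap.ker (J3.mkQ ∘ₗ LinearMap.snd R3 R3 R3) ≤ U3span := by
    intro m hm
    simp only [LinearMap.mem_ker, LinearMap.comp_apply, LinearMap.snd_apply,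
      Submodule.mkQ_apply, Submodule.Quotient.mk_eq_zero] at hm
    rw [U3span, U3_eq]
    exact Submodule.mem_prod.mpr ⟨trivial, hm⟩
  have hass3 : associatedPrimes R3 ((R3 × R3) ⧸ U3span) ⊆ {Ideal.span {(X 1:R3), X 2}} := by
    have hinj : Function.Injective (U3span.liftQ _ hcond3) :=
      LinearMap.ker_eq_bot.mp (Submodule.ker_liftQ_eq_bot _ _ _ hker3)
    refine (associatedPrimes.subset_of_injective hinj).trans ?_
    rw [associatedPrimes.eq_singleton_of_isPrimary primary_J3, radical_J3]
  -- e2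
  set ρ : (R3 × R3) →ₗ[R3] R3 :=
    (X 2 : R3) • LinearMap.fst R3 R3 R3 - (X 0 : R3) • LinearMap.snd R3 R3 R3 with hρ
  have hρ_apply : ∀ m : R3 × R3, ρ m = X 2 * m.1 - X 0 * m.2 := by
    intro m
    simp [hρ, smul_eq_mul]
  have hcond2 : U2span ≤ LinearMap.ker ((Ideal.span {q3}).mkQ ∘ₗ ρ) := by
    rintro ⟨F, G⟩ hm
    rw [U2span] at hm
    simp only [LinearMap.mem_ker, LinearMap.comp_apply, Submodule.mkQ_apply,
      Submodule.Quotient.mk_eq_zero, hρ_apply]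
    exact (mem_U2_iff F G).mp hm
  have hker2 : LinearMap.ker ((Ideal.span {q3}).mkQ ∘ₗ ρ) ≤ U2span := by
    rintro ⟨F, G⟩ hm
    simp only [LinearMap.mem_ker, LinearMap.comp_apply, Submodule.mkQ_apply,
      Submodule.Quotient.mk_eq_zero, hρ_apply] at hm
    rw [U2span]
    exact (mem_U2_iff F G).mpr hm
  have hass2 : associatedPrimes R3 ((R3 × R3) ⧸ U2span) ⊆ {Ideal.span {q3}} := by
    have hinj : Function.Injective (U2span.liftQ _ hcond2) :=
      LinearMap.ker_eq_bot.mp (Submodule.ker_liftQ_eq_bot _ _ _ hker2)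
    refine (associatedPrimes.subset_of_injective hinj).trans ?_
    rw [associatedPrimes.eq_singleton_of_isPrimary isPrime_q.isPrimary, isPrime_q.radical]
  -- the big injection
  set big : (R3 × R3) →ₗ[R3] ((R3 × R3) ⧸ U1span) × (((R3 × R3) ⧸ U2span) × ((R3 × R3) ⧸ U3span)) :=
    LinearMap.prod U1span.mkQ (LinearMap.prod U2span.mkQ U3span.mkQ) with hbig
  have hkerbig : LinearMap.ker big = U1span ⊓ (U2span ⊓ U3span) := by
    rw [hbig, LinearMap.ker_prod, LinearMap.ker_prod, Submodule.ker_mkQ, Submodule.ker_mkQ,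
      Submodule.ker_mkQ]
  have hcondU : Uspan ≤ LinearMap.ker big := by
    rw [hkerbig, ← inf_assoc, ← part1]
  have hkerU : LinearMap.ker big ≤ Uspan := by
    rw [hkerbig, ← inf_assoc, ← part1]
  have hinjU : Function.Injective (Uspan.liftQ _ hcondU) :=
    LinearMap.ker_eq_bot.mp (Submodule.ker_liftQ_eq_bot _ _ _ hkerU)
  have hsub : associatedPrimes R3 ((R3 × R3) ⧸ Uspan)
      ⊆ {Ideal.span {X 0}, Ideal.span {q3}, Ideal.span {(X 1 : R3), X 2}} := by
    refine (associatedPrimes.subset_of_injective hinjU).trans ?_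
    refine assPrimes_prod_subset.trans ?_
    intro P hP
    rcases hP with hP | hP
    · exact Set.mem_insert_iff.mpr (Or.inl (hass1 hP))
    · rcases assPrimes_prod_subset hP with hP | hP
      · exact Set.mem_insert_iff.mpr (Or.inr (Set.mem_insert_iff.mpr (Or.inl (hass2 hP))))
      · exact Set.mem_insert_iff.mpr (Or.inr (Set.mem_insert_iff.mpr (Or.inr (hass3 hP))))
  -- the three memberships
  have hmem1 : Ideal.span {(X 0:R3)} ∈ associatedPrimes R3 ((R3 × R3) ⧸ Uspan) := by
    refine isAssociatedPrime_iff.mpr ⟨isPrime_x, Submodule.Quotient.mk ((X 1 ^ 2 : R3), (X 2 ^ 2 : R3)), ?_⟩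
    ext r
    rw [Submodule.mem_colon_singleton, Submodule.mem_bot, ← Submodule.Quotient.mk_smul,
      Submodule.Quotient.mk_eq_zero, Prod.smul_mk, smul_eq_mul, smul_eq_mul, mem_U_iff]
    constructor
    · intro hr
      obtain ⟨s, rfl⟩ := Ideal.mem_span_singleton.mp hr
      refine ⟨Ideal.mem_span_singleton.mpr ⟨s * X 1 ^ 2, by ring⟩, ?_, ?_⟩
      · exact Ideal.mem_span_singleton.mpr ⟨-(X 0 * s * X 2), by rw [q3]; ring⟩
      · exact J3.mul_mem_left _ (Ideal.subset_span (by simp))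
    · rintro ⟨hx, -, -⟩
      have : (X 0 : R3) ∣ r * X 1 ^ 2 := Ideal.mem_span_singleton.mp hx
      rcases prime_x.dvd_mul.mp this with h' | h'
      · exact Ideal.mem_span_singleton.mpr h'
      · exact absurd h' x_ndvd_y2
  have hmem2 : Ideal.span {q3} ∈ associatedPrimes R3 ((R3 × R3) ⧸ Uspan) := by
    refine isAssociatedPrime_iff.mpr ⟨isPrime_q, Submodule.Quotient.mk ((X 0 : R3), (X 1 ^ 2 : R3)), ?_⟩
    ext r
    rw [Submodule.mem_colon_singleton, Submodule.mem_bot, ← Submodule.Quotient.mk_smul,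
      Submodule.Quotient.mk_eq_zero, Prod.smul_mk, smul_eq_mul, smul_eq_mul, mem_U_iff]
    constructor
    · intro hr
      obtain ⟨s, rfl⟩ := Ideal.mem_span_singleton.mp hr
      refine ⟨Ideal.mem_span_singleton.mpr ⟨q3 * s, by ring⟩, ?_, ?_⟩
      · exact Ideal.mem_span_singleton.mpr ⟨s * X 0 * (X 2 - X 1 ^ 2), by rw [q3]; ring⟩
      · exact J3.mul_mem_left _ (Ideal.subset_span (by simp))
    · rintro ⟨-, hq, -⟩
      have : q3 ∣ r * (X 0 * (X 2 - X 1 ^ 2)) := by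
        have := Ideal.mem_span_singleton.mp hq
        rwa [show X 2 * (r * X 0) - X 0 * (r * X 1 ^ 2) = r * (X 0 * (X 2 - X 1 ^ 2)) by ring]
          at this
      rcases prime_q.dvd_mul.mp this with h' | h'
      · exact Ideal.mem_span_singleton.mpr h'
      · rcases prime_q.dvd_mul.mp h' with h'' | h''
        · exact absurd h'' q_ndvd_x
        · exact absurd h'' q_ndvd_zy2
  have hmem3 : Ideal.span {(X 1 : R3), X 2} ∈ associatedPrimes R3 ((R3 × R3) ⧸ Uspan) := by
    refine isAssociatedPrime_iff.mpr ⟨isPrime_yz, Submodule.Quotient.mk ((X 0 : R3), (X 2 : R3)), ?_⟩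
    ext r
    rw [Submodule.mem_colon_singleton, Submodule.mem_bot, ← Submodule.Quotient.mk_smul,
      Submodule.Quotient.mk_eq_zero, Prod.smul_mk, smul_eq_mul, smul_eq_mul, mem_U_iff]
    constructor
    · intro hr
      obtain ⟨a, b, rfl⟩ := Ideal.mem_span_pair.mp hr
      refine ⟨Ideal.mem_span_singleton.mpr ⟨a * X 1 + b * X 2, by ring⟩, ?_, ?_⟩
      · exact Ideal.mem_span_singleton.mpr ⟨0, by ring⟩
      · rw [show (a * X 1 + b * X 2) * X 2 = a • (X 1 * X 2) + b • (X 2 ^ 2 : R3)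
          by simp only [smul_eq_mul]; ring]
        have hyz2 : (X 1 * X 2 : R3) ∈ J3 :=
          Ideal.subset_span (Set.mem_insert_iff.mpr (Or.inr (Set.mem_insert_iff.mpr (Or.inl rfl))))
        have hz2 : ((X 2 : R3) ^ 2) ∈ J3 :=
          Ideal.subset_span (Set.mem_insert_iff.mpr (Or.inr (Set.mem_insert_iff.mpr (Or.inr rfl))))
        exact add_mem (Submodule.smul_mem _ _ hyz2) (Submodule.smul_mem _ _ hz2)
    · rintro ⟨-, -, hJ⟩
      have hd := ((mem_J3_iff (r * X 2)).mp hJ).2.2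
      rw [mem_yz_iff]
      have : aeval gyz (pderiv 2 (r * X 2)) = aeval gyz r := by
        simp [pderiv_mul, pderiv_X, Pi.single_apply]
      rwa [this] at hd
  ext P
  constructor
  · exact fun h => hsub h
  · intro h
    rcases h with rfl | rfl | rfl
    · exact hmem1
    · exact hmem2
    · exact hmem3

end Statement19Aux

/-- in `R = ℚ[x,y,z]` and `M = R²`, the submodule `U` generated by
`(x²,y²), (xy,yz), (xz,z²)` satisfies `U = U₁ ∩ U₂ ∩ U₃` with `U₁ = ⟨(0,1),(x,0)⟩`,
`U₂ = ⟨(x,z),(y²,z²),(0,xz−y²)⟩`, `U₃ = ⟨(1,0),(0,y²),(0,yz),(0,z²)⟩`, and the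
associated primes of `M/U` are `(x)`, `(xz−y²)`, `(y,z)`. -/
theorem module_primary_decomposition_example :
    let R := MvPolynomial (Fin 3) ℚ
    let x : R := MvPolynomial.X 0
    let y : R := MvPolynomial.X 1
    let z : R := MvPolynomial.X 2
    let U : Submodule R (R × R) :=
      Submodule.span R {(x^2, y^2), (x*y, y*z), (x*z, z^2)}
    let U1 : Submodule R (R × R) := Submodule.span R {((0:R), (1:R)), (x, 0)}
    let U2 : Submodule R (R × R) :=
      Submodule.span R {(x, z), (y^2, z^2), (0, x*z - y^2)}
    let U3 : Submodule R (R × R) :=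
      Submodule.span R {((1:R), (0:R)), (0, y^2), (0, y*z), (0, z^2)}
    U = U1 ⊓ U2 ⊓ U3 ∧
    associatedPrimes R ((R × R) ⧸ U)
      = {Ideal.span {x}, Ideal.span {x*z - y^2}, Ideal.span {y, z}} := by
  intro R x y z U U1 U2 U3
  exact ⟨part1, part2⟩
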